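/- Let χ be a bicharacter on ℤ^I with values in 𝕜∖{0}, p ∈ I such that χ is p-finite, and i ∈ I∖{p}; write c_{pi} = c^χ_{pi}. Then in the free algebra 𝒰^+(χ) the element E^+_{i,1−c_{pi}} − E^−_{i,1−c_{pi}} lies in 𝕜·E_i E_p^{1−c_{pi}}, and in the free algebra 𝒰^−(χ) the element F^+_{i,1−c_{pi}} − F^−_{i,1−c_{pi}} lies in 𝕜·F_i F_p^{1−c_{pi}}. If moreover [1−c_{pi}]_{q_pp}! ≠ 0, then both differences are zero. -/

import Mathlib

/-- The quantum integer `[n]_q = 1 + q + ⋯ + q^{n-1}` for `n ∈ ℕ`. -/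
def qNat {𝕜 : Type*} [Field 𝕜] (q : 𝕜) (n : ℕ) : 𝕜 :=
  ∑ i ∈ Finset.range n, q ^ i

/-- The quantum factorial `[n]_q! = [1]_q [2]_q ⋯ [n]_q`. -/
def qFact {𝕜 : Type*} [Field 𝕜] (q : 𝕜) (n : ℕ) : 𝕜 :=
  ∏ i ∈ Finset.range n, qNat q (i + 1)

variable {𝕜 : Type*} [Field 𝕜] {I : Type*} [Fintype I] [DecidableEq I]

/-- The standard basis vector `ε_i` of `ℤ^I`. -/
def eps (i : I) : I → ℤ := Pi.single i 1

/-- `χ : ℤ^I × ℤ^I → 𝕜∖{0}` is a bicharacter. -/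
def IsBichar (χ : (I → ℤ) → (I → ℤ) → 𝕜) : Prop :=
  (∀ a b c : I → ℤ, χ (a + b) c = χ a c * χ b c) ∧
  (∀ c a b : I → ℤ, χ c (a + b) = χ c a * χ c b) ∧
  (∀ a b : I → ℤ, χ a b ≠ 0)

/-- `χ` is `p`-finite: for every `j ≠ p` there is `m ∈ ℕ₀` with
`[m+1]_{q_{pp}} = 0` or `q_{pp}^m q_{pj} q_{jp} = 1`. -/
def IsPFinite (χ : (I → ℤ) → (I → ℤ) → 𝕜) (p : I) : Prop :=
  ∀ j, j ≠ p → ∃ m : ℕ,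
    qNat (χ (eps p) (eps p)) (m + 1) = 0 ∨
    χ (eps p) (eps p) ^ m * χ (eps p) (eps j) * χ (eps j) (eps p) = 1

open Classical in
/-- The Cartan integers `c^χ_{pj}` of a (`p`-finite) bicharacter `χ`. -/
noncomputable def cartan (χ : (I → ℤ) → (I → ℤ) → 𝕜) (p j : I) : ℤ :=
  if p = j then 2
  else if h : ∃ m : ℕ,
      qNat (χ (eps p) (eps p)) (m + 1) = 0 ∨
      χ (eps p) (eps p) ^ m * χ (eps p) (eps j) * χ (eps j) (eps p) = 1
    then -(Nat.find h) else 0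

/-- The reflection `σ_p^χ ∈ Aut(ℤ^I)`, `σ_p^χ(ε_j) = ε_j − c^χ_{pj} ε_p`
(an involution, so equal to its own inverse). -/
noncomputable def sigmaChi (χ : (I → ℤ) → (I → ℤ) → 𝕜) (p : I) (a : I → ℤ) : I → ℤ :=
  a - (∑ j, cartan χ p j * a j) • eps p

/-- `r_p(χ) = (σ_p^χ)^*χ`, i.e. `r_p(χ)(a,b) = χ((σ_p^χ)⁻¹ a, (σ_p^χ)⁻¹ b)`. -/
noncomputable def rp (χ : (I → ℤ) → (I → ℤ) → 𝕜) (p : I) :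
    (I → ℤ) → (I → ℤ) → 𝕜 :=
  fun a b => χ (sigmaChi χ p a) (sigmaChi χ p b)

/-- The general recursion `Y_0 = Y`, `Y_{m+1} = X Y_m − α β^m Y_m X` in a
`𝕜`-algebra. With `X = E_p`, `Y = E_i` one gets: `E^+_{i,m}` for `α = q_{pi}`,
`β = q_{pp}`; `E^−_{i,m}` for `α = q_{ip}⁻¹`, `β = q_{pp}⁻¹`. With `X = F_p`,
`Y = F_i`: `F^+_{i,m}` for `α = q_{ip}`, `β = q_{pp}`; `F^−_{i,m}` for
`α = q_{pi}⁻¹`, `β = q_{pp}⁻¹`. -/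
def recE {A : Type*} [Ring A] [Algebra 𝕜 A] (α β : 𝕜) (X Y : A) : ℕ → A
  | 0 => Y
  | m + 1 => X * recE α β X Y m - (α * β ^ m) • (recE α β X Y m * X)

def co (α β : 𝕜) : ℕ → ℕ → 𝕜
  | 0, 0 => 1
  | 0, _+1 => 0
  | _+1, 0 => 1
  | m+1, k+1 => co α β m (k+1) - α * β ^ m * co α β m k

lemma qNat_succ (q : 𝕜) (n : ℕ) : qNat q (n+1) = qNat q n + q ^ n := by
  simp [qNat, Finset.sum_range_succ]

lemma qNat_succ' (q : 𝕜) (n : ℕ) : qNat q (n+1) = 1 + q * qNat q n := by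
  simp [qNat, Finset.sum_range_succ', Finset.mul_sum, pow_succ, add_comm, mul_comm]

lemma co_zero_right (α β : 𝕜) (m : ℕ) : co α β m 0 = 1 := by
  cases m <;> rfl

lemma co_of_lt (α β : 𝕜) {m k : ℕ} (h : m < k) : co α β m k = 0 := by
  induction m generalizing k with
  | zero => match k, h with | k+1, _ => rfl
  | succ m ih =>
    match k, h with
    | k+1, h =>
      have h1 : m < k + 1 := by omega
      have h2 : m < k := by omega
      rw [co, ih h1, ih h2]; ring

lemma co_one (α β : 𝕜) (m : ℕ) : co α β m 1 = -(α * qNat β m) := by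
  induction m with
  | zero => simp [co, qNat]
  | succ m ih => rw [co, ih, co_zero_right, qNat_succ]; ring

lemma co_alt (α β : 𝕜) (m k : ℕ) :
    co α β (m+1) (k+1) = β ^ (k+1) * co α β m (k+1) - α * β ^ k * co α β m k := by
  induction m generalizing k with
  | zero =>
    match k with
    | 0 => simp [co]
    | k+1 =>
      have h1 : co α β (0+1) (k+1+1) = 0 := co_of_lt _ _ (by omega)
      have h2 : co α β 0 (k+1+1) = 0 := co_of_lt _ _ (by omega)
      have h3 : co α β 0 (k+1) = 0 := co_of_lt _ _ (by omega)
      simp only [h1, h2, h3]; ring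
  | succ m ih =>
    match k with
    | 0 =>
      show co α β (m+1) 1 - α * β ^ (m+1) * co α β (m+1) 0 = _
      rw [co_one, co_zero_right]
      linear_combination (-α) * ((qNat_succ β (m+1)).symm.trans (qNat_succ' β (m+1)))
    | k+1 =>
      have e2 : co α β (m+1+1) (k+1+1) =
          co α β (m+1) (k+1+1) - α * β ^ (m+1) * co α β (m+1) (k+1) := rfl
      have p1 : co α β (m+1) (k+1+1) = co α β m (k+1+1) - α * β ^ m * co α β m (k+1) := rfl
      have p2 : co α β (m+1) (k+1) = co α β m (k+1) - α * β ^ m * co α β m k := rfl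
      have i1 := ih (k+1)
      have i2 := ih k
      linear_combination e2 - β^(k+1+1) * p1 + α * β^(k+1) * p2 + i1 - α * β^(m+1) * i2

lemma qNat_one (β : 𝕜) : qNat β 1 = 1 := by simp [qNat]

lemma co_L (α β : 𝕜) (m k : ℕ) :
    qNat β (k+1) * co α β (m+1) (k+1) = -(α * β ^ k * qNat β (m+1) * co α β m k) := by
  induction m generalizing k with
  | zero =>
    match k with
    | 0 => simp [co, qNat]
    | k+1 =>
      have h1 : co α β (0+1) (k+1+1) = 0 := co_of_lt _ _ (by omega)
      have h2 : co α β 0 (k+1) = 0 := co_of_lt _ _ (by omega)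
      simp only [h1, h2]; ring
  | succ m ih =>
    match k with
    | 0 =>
      rw [co_one, co_zero_right, qNat_one]; ring
    | k+1 =>
      have e : co α β (m+1+1) (k+1+1) =
          co α β (m+1) (k+1+1) - α * β ^ (m+1) * co α β (m+1) (k+1) := rfl
      have p2 : co α β (m+1) (k+1) = co α β m (k+1) - α * β ^ m * co α β m k := rfl
      have i1 := ih (k+1)
      have i2 := ih k
      have h4a : qNat β (k+1+1) = qNat β (k+1) + β ^ (k+1) := qNat_succ β (k+1)
      have h4b : qNat β (m+1+1) = qNat β (m+1) + β ^ (m+1) := qNat_succ β (m+1)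
      rw [h4a] at i1 ⊢
      rw [e, h4b]
      linear_combination i1 + (α * β^(k+1) * qNat β (m+1)) * p2 - (α * β^(m+1)) * i2

lemma co_inv (α β γ : 𝕜) (hα : α ≠ 0) (hβ : β ≠ 0) (m k : ℕ) :
    co γ β⁻¹ (m+1) k = (γ * α⁻¹ * (β ^ m)⁻¹) ^ k * co α β (m+1) k := by
  induction m generalizing k with
  | zero =>
    match k with
    | 0 => simp [co_zero_right]
    | 1 =>
      have e1 : co γ β⁻¹ (0+1) 1 = co γ β⁻¹ 0 1 - γ * (β⁻¹) ^ 0 * co γ β⁻¹ 0 0 := rfl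
      have e2 : co α β (0+1) 1 = co α β 0 1 - α * β ^ 0 * co α β 0 0 := rfl
      rw [e1, e2]
      show (0:𝕜) - γ * (β⁻¹)^0 * 1 = _ * ((0:𝕜) - α * β^0 * 1)
      field_simp
      ring
    | k+2 =>
      rw [co_of_lt _ _ (show 0+1 < k+2 by omega) (k := k+2),
        co_of_lt _ _ (show 0+1 < k+2 by omega) (k := k+2)]
      ring
  | succ m ih =>
    match k with
    | 0 => simp [co_zero_right]
    | j+1 =>
      have halt : co γ β⁻¹ (m+1+1) (j+1) =
          (β⁻¹) ^ (j+1) * co γ β⁻¹ (m+1) (j+1) - γ * (β⁻¹) ^ j * co γ β⁻¹ (m+1) j :=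
        co_alt γ β⁻¹ (m+1) j
      have hpr : co α β (m+1+1) (j+1) =
          co α β (m+1) (j+1) - α * β ^ (m+1) * co α β (m+1) j := rfl
      rw [halt, ih (j+1), ih j, hpr]
      have hbm : (β:𝕜) ^ m ≠ 0 := pow_ne_zero _ hβ
      simp only [mul_pow, inv_pow, ← pow_mul]
      field_simp
      ring

lemma recE_eq {A : Type*} [Ring A] [Algebra 𝕜 A] (α β : 𝕜) (X Y : A) (m : ℕ) :
    recE α β X Y m =
      ∑ k ∈ Finset.range (m+1), co α β m k • (X ^ (m - k) * Y * X ^ k) := by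
  induction m with
  | zero => simp [recE, co]
  | succ m ih =>
    have S1 : X * recE α β X Y m =
        ∑ k ∈ Finset.range (m+1), co α β m k • (X ^ (m+1-k) * Y * X ^ k) := by
      rw [ih, Finset.mul_sum]
      refine Finset.sum_congr rfl fun k hk => ?_
      rw [Finset.mem_range] at hk
      rw [mul_smul_comm, ← mul_assoc, ← mul_assoc, ← pow_succ',
        show m - k + 1 = m + 1 - k by omega]
    have S2 : (α * β ^ m) • (recE α β X Y m * X) =
        ∑ k ∈ Finset.range (m+1),
          (α * β ^ m * co α β m k) • (X ^ (m-k) * Y * X ^ (k+1)) := by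
      rw [ih, Finset.sum_mul, Finset.smul_sum]
      refine Finset.sum_congr rfl fun k hk => ?_
      rw [smul_mul_assoc, smul_smul, mul_assoc, mul_assoc, ← pow_succ]
    rw [show recE α β X Y (m+1) =
        X * recE α β X Y m - (α * β ^ m) • (recE α β X Y m * X) from rfl, S1, S2]
    rw [Finset.sum_range_succ' (fun k => co α β (m+1) k • (X ^ (m+1-k) * Y * X ^ k)) (m+1)]
    have hterm : ∀ k, co α β (m+1) (k+1) • (X ^ (m+1-(k+1)) * Y * X ^ (k+1)) =
        co α β m (k+1) • (X ^ (m-k) * Y * X ^ (k+1))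
          - (α * β ^ m * co α β m k) • (X ^ (m-k) * Y * X ^ (k+1)) := by
      intro k
      rw [show co α β (m+1) (k+1) = co α β m (k+1) - α * β ^ m * co α β m k from rfl,
        sub_smul, show m + 1 - (k+1) = m - k by omega]
    simp only [hterm]
    rw [Finset.sum_sub_distrib]
    have T1 : ∑ k ∈ Finset.range (m+1), co α β m (k+1) • (X ^ (m-k) * Y * X ^ (k+1)) =
        ∑ k ∈ Finset.range m, co α β m (k+1) • (X ^ (m-k) * Y * X ^ (k+1)) := by
      rw [Finset.sum_range_succ, co_of_lt _ _ (Nat.lt_succ_self m), zero_smul, add_zero]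
    have S1' : ∑ k ∈ Finset.range (m+1), co α β m k • (X ^ (m+1-k) * Y * X ^ k) =
        ∑ k ∈ Finset.range m, co α β m (k+1) • (X ^ (m-k) * Y * X ^ (k+1))
          + co α β m 0 • (X ^ (m+1) * Y * X ^ 0) := by
      rw [Finset.sum_range_succ' (fun k => co α β m k • (X ^ (m+1-k) * Y * X ^ k)) m]
      simp only [Nat.succ_sub_succ, Nat.sub_zero]
    rw [T1, S1', co_zero_right, co_zero_right]
    simp only [Nat.sub_zero]
    abel

lemma main_eq {A : Type*} [Ring A] [Algebra 𝕜 A] (X Y : A) (q a b : 𝕜)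
    (ha : a ≠ 0) (hq : q ≠ 0) (c' : ℕ) (heq : q ^ c' * a * b = 1) :
    recE a q X Y (c'+1) = recE b⁻¹ q⁻¹ X Y (c'+1) := by
  rw [recE_eq, recE_eq]
  refine Finset.sum_congr rfl fun k _ => ?_
  have ht : b⁻¹ * a⁻¹ * ((q:𝕜) ^ c')⁻¹ = 1 := by
    have hb : b ≠ 0 := by
      intro h; rw [h, mul_zero] at heq; exact one_ne_zero heq.symm
    field_simp
    linear_combination -heq
  rw [co_inv a q b⁻¹ ha hq c' k, ht, one_pow, one_mul]

lemma main_k {A : Type*} [Ring A] [Algebra 𝕜 A] (X Y : A) (q a b : 𝕜)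
    (ha : a ≠ 0) (hq : q ≠ 0) (c' : ℕ)
    (hspec : qNat q (c'+1) = 0 ∨ q ^ c' * a * b = 1)
    (hmin : ∀ n, n < c' → qNat q (n+1) ≠ 0) :
    ∃ k : 𝕜, recE a q X Y (c'+1) - recE b⁻¹ q⁻¹ X Y (c'+1) = k • (Y * X ^ (c'+1)) := by
  rcases hspec with h0 | heq
  · refine ⟨co a q (c'+1) (c'+1) - co b⁻¹ q⁻¹ (c'+1) (c'+1), ?_⟩
    rw [recE_eq, recE_eq, ← Finset.sum_sub_distrib]
    simp only [← sub_smul]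
    rw [Finset.sum_range_succ]
    have hz : ∀ k ∈ Finset.range (c'+1),
        (co a q (c'+1) k - co b⁻¹ q⁻¹ (c'+1) k) • (X ^ (c'+1-k) * Y * X ^ k) = 0 := by
      intro k hk
      rw [Finset.mem_range] at hk
      match k, hk with
      | 0, _ => rw [co_zero_right, co_zero_right, sub_self, zero_smul]
      | j+1, hk =>
        have hj : j < c' := by omega
        have h1 : co a q (c'+1) (j+1) = 0 := by
          have hL := co_L a q c' j
          rw [h0] at hL
          simp only [mul_zero, zero_mul, neg_zero] at hL
          rcases mul_eq_zero.mp hL with h | h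
          · exact absurd h (hmin j hj)
          · exact h
        rw [co_inv a q b⁻¹ ha hq c' (j+1), h1, mul_zero, sub_self, zero_smul]
    rw [Finset.sum_eq_zero hz, zero_add, Nat.sub_self, pow_zero, one_mul]
  · exact ⟨0, by rw [main_eq X Y q a b ha hq c' heq, sub_self, zero_smul]⟩

open FreeAlgebra in
/-- Lemma (le:E+=E-): for a `p`-finite bicharacter `χ` and `i ≠ p`, in the free
algebra `𝒰^+(χ)` one has `E^+_{i,1−c_{pi}} − E^−_{i,1−c_{pi}} ∈ 𝕜 E_i E_p^{1−c_{pi}}`,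
and in `𝒰^−(χ)` one has `F^+_{i,1−c_{pi}} − F^−_{i,1−c_{pi}} ∈ 𝕜 F_i F_p^{1−c_{pi}}`;
if `[1−c_{pi}]_{q_{pp}}! ≠ 0` then both differences vanish. -/
theorem Eplus_sub_Eminus (χ : (I → ℤ) → (I → ℤ) → 𝕜) (hχ : IsBichar χ)
    (p : I) (hp : IsPFinite χ p) (i : I) (hip : i ≠ p) :
    (∃ k : 𝕜,
      recE (χ (eps p) (eps i)) (χ (eps p) (eps p)) (ι 𝕜 p) (ι 𝕜 i)
          (1 - cartan χ p i).toNat -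
        recE (χ (eps i) (eps p))⁻¹ (χ (eps p) (eps p))⁻¹ (ι 𝕜 p) (ι 𝕜 i)
          (1 - cartan χ p i).toNat =
        k • (ι 𝕜 i * ι 𝕜 p ^ (1 - cartan χ p i).toNat)) ∧
    (∃ k : 𝕜,
      recE (χ (eps i) (eps p)) (χ (eps p) (eps p)) (ι 𝕜 p) (ι 𝕜 i)
          (1 - cartan χ p i).toNat -
        recE (χ (eps p) (eps i))⁻¹ (χ (eps p) (eps p))⁻¹ (ι 𝕜 p) (ι 𝕜 i)
          (1 - cartan χ p i).toNat =
        k • (ι 𝕜 i * ι 𝕜 p ^ (1 - cartan χ p i).toNat)) ∧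
    (qFact (χ (eps p) (eps p)) (1 - cartan χ p i).toNat ≠ 0 →
      (recE (χ (eps p) (eps i)) (χ (eps p) (eps p)) (ι 𝕜 p) (ι 𝕜 i)
          (1 - cartan χ p i).toNat =
        recE (χ (eps i) (eps p))⁻¹ (χ (eps p) (eps p))⁻¹ (ι 𝕜 p) (ι 𝕜 i)
          (1 - cartan χ p i).toNat) ∧
      (recE (χ (eps i) (eps p)) (χ (eps p) (eps p)) (ι 𝕜 p) (ι 𝕜 i)
          (1 - cartan χ p i).toNat =
        recE (χ (eps p) (eps i))⁻¹ (χ (eps p) (eps p))⁻¹ (ι 𝕜 p) (ι 𝕜 i)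
          (1 - cartan χ p i).toNat)) := by
  classical
  have hq : χ (eps p) (eps p) ≠ 0 := hχ.2.2 _ _
  have ha : χ (eps p) (eps i) ≠ 0 := hχ.2.2 _ _
  have hb : χ (eps i) (eps p) ≠ 0 := hχ.2.2 _ _
  have hfind := hp i hip
  have hcar : cartan χ p i = -(Nat.find hfind) := by
    unfold cartan
    rw [if_neg (Ne.symm hip), dif_pos hfind]
  have hN : (1 - cartan χ p i).toNat = Nat.find hfind + 1 := by rw [hcar]; omega
  set c' := Nat.find hfind with hc'
  have hspec := Nat.find_spec hfind
  have hmin : ∀ n, n < c' → qNat (χ (eps p) (eps p)) (n+1) ≠ 0 :=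
    fun n hn h0 => Nat.find_min hfind hn (Or.inl h0)
  have hspec2 : qNat (χ (eps p) (eps p)) (c'+1) = 0 ∨
      χ (eps p) (eps p) ^ c' * χ (eps i) (eps p) * χ (eps p) (eps i) = 1 := by
    rcases hspec with h | h
    · exact Or.inl h
    · exact Or.inr (by linear_combination h)
  rw [hN]
  refine ⟨main_k _ _ _ _ (χ (eps i) (eps p)) ha hq c' hspec hmin,
    main_k _ _ _ _ (χ (eps p) (eps i)) hb hq c' hspec2 hmin, fun hfac => ?_⟩
  have hne : qNat (χ (eps p) (eps p)) (c'+1) ≠ 0 := fun h => hfac (by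
    rw [qFact]
    exact Finset.prod_eq_zero (Finset.self_mem_range_succ c') h)
  have heq : χ (eps p) (eps p) ^ c' * χ (eps p) (eps i) * χ (eps i) (eps p) = 1 := by
    rcases hspec with h | h
    · exact absurd h hne
    · exact h
  have heq2 : χ (eps p) (eps p) ^ c' * χ (eps i) (eps p) * χ (eps p) (eps i) = 1 := by
    linear_combination heq
  exact ⟨main_eq _ _ _ _ (χ (eps i) (eps p)) ha hq c' heq,
    main_eq _ _ _ _ (χ (eps p) (eps i)) hb hq c' heq2⟩
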